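/- arXiv:2404.12727 — 3 statements merged into one kernel-verified Lean document; each statement's English description precedes it below -/
import Mathlib

section
/- Let φ : X → Y be an extension of compact semiflows of a topological monoid T such that t·φ⁻¹(y) = φ⁻¹(t·y) for all t ∈ T and y ∈ Y. If φ is highly proximal and the set of almost periodic points of the semiflow on X is dense in X, then every nonempty open subset U of X contains a full fiber, i.e., there exists y ∈ Y with φ⁻¹(y) ⊆ U. -/
/-- The hyperspace `2^X` of all nonempty closed subsets of `X`. -/
def Hyper (X : Type*) [TopologicalSpace X] : Type _ := {K : Set X // IsClosed K ∧ K.Nonempty}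

/-- The Vietoris topology on the hyperspace, generated by the subbasic sets
`{K | K ⊆ U}` and `{K | K ∩ U ≠ ∅}` for `U` open. -/
instance Hyper.instTopologicalSpace (X : Type*) [TopologicalSpace X] :
    TopologicalSpace (Hyper X) :=
  TopologicalSpace.generateFrom
    ({S | ∃ U : Set X, IsOpen U ∧ S = {K : Hyper X | K.1 ⊆ U}} ∪
     {S | ∃ U : Set X, IsOpen U ∧ S = {K : Hyper X | (K.1 ∩ U).Nonempty}})

/-- The induced map `2^f : 2^X → 2^Y`, `K ↦ f[K]`.  (For closed subsets of a compact
space and continuous `f` into a Hausdorff space the image `f[K]` is closed, so taking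
the closure below is redundant and this is indeed `K ↦ f[K]`.) -/
def hyperMap {X Y : Type*} [TopologicalSpace X] [TopologicalSpace Y] (f : X → Y) :
    Hyper X → Hyper Y :=
  fun K => ⟨closure (f '' K.1), isClosed_closure, (K.2.2.image f).closure⟩

/-- A continuous surjection `g : A → B` is *semi-open* if for every nonempty open set
`U ⊆ A`, the interior of the image `g '' U` is nonempty. -/
def SemiOpen {A B : Type*} [TopologicalSpace A] [TopologicalSpace B] (g : A → B) : Prop :=
  ∀ U : Set A, IsOpen U → U.Nonempty → (interior (g '' U)).Nonempty

/-- A point `x` is *almost periodic* for the semiflow `T ↷ X` if `x ∈ cl(T·x)` and the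
orbit closure `cl(T·x)` is a minimal subset, i.e. every point of `cl(T·x)` has orbit
closure equal to `cl(T·x)`. -/
def IsAlmostPeriodicPt (T : Type*) {X : Type*} [Monoid T] [MulAction T X]
    [TopologicalSpace X] (x : X) : Prop :=
  x ∈ closure (MulAction.orbit T x) ∧
  ∀ z ∈ closure (MulAction.orbit T x),
    closure (MulAction.orbit T z) = closure (MulAction.orbit T x)

/-- The extension `φ : X → Y` of semiflows is *highly proximal* if for every `y ∈ Y`
there is a net `(tₙ)` in `T` with `tₙ • φ⁻¹(y)` converging in the hyperspace `2^X` to a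
singleton; equivalently (as stated here), for every `y ∈ Y` some singleton `{x}` lies in
the closure in `2^X` of the set `{t • φ⁻¹(y) | t ∈ T}`, where `T` acts on `2^X` by
`t • K = cl {t • x | x ∈ K}`. -/
def HighlyProximal (T : Type*) {X Y : Type*} [Monoid T] [MulAction T X]
    [TopologicalSpace X] [T1Space X] [TopologicalSpace Y] [T1Space Y]
    (φ : X → Y) (hc : Continuous φ) (hs : Function.Surjective φ) : Prop :=
  ∀ y : Y, ∃ x : X,
    (⟨{x}, isClosed_singleton, Set.singleton_nonempty x⟩ : Hyper X) ∈
      closure (Set.range fun t : T =>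
        hyperMap (fun z : X => t • z)
          ⟨φ ⁻¹' {y}, isClosed_singleton.preimage hc,
            (Set.singleton_nonempty y).preimage hs⟩)


open Set TopologicalSpace

lemma hyper_isOpen_subset {X : Type*} [TopologicalSpace X] {U : Set X} (hU : IsOpen U) :
    IsOpen {K : Hyper X | K.1 ⊆ U} :=
  TopologicalSpace.isOpen_generateFrom_of_mem (Or.inl ⟨U, hU, rfl⟩)

lemma hyper_isOpen_inter {X : Type*} [TopologicalSpace X] {U : Set X} (hU : IsOpen U) :
    IsOpen {K : Hyper X | (K.1 ∩ U).Nonempty} :=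
  TopologicalSpace.isOpen_generateFrom_of_mem (Or.inr ⟨U, hU, rfl⟩)

lemma hyperMap_image_closed {X : Type*} [TopologicalSpace X] [CompactSpace X] [T2Space X]
    {f : X → X} (hf : Continuous f) (K : Hyper X) : closure (f '' K.1) = f '' K.1 :=
  ((K.2.1.isCompact.image hf).isClosed).closure_eq

lemma hyperMap_continuous {X : Type*} [TopologicalSpace X] [CompactSpace X] [T2Space X]
    {f : X → X} (hf : Continuous f) : Continuous (hyperMap f) := by
  apply continuous_generateFrom_iff.mpr
  rintro S (⟨U, hU, rfl⟩ | ⟨U, hU, rfl⟩)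
  · have h : hyperMap f ⁻¹' {K : Hyper X | K.1 ⊆ U} = {K : Hyper X | K.1 ⊆ f ⁻¹' U} := by
      ext K
      simp only [Set.mem_preimage, Set.mem_setOf_eq, hyperMap, hyperMap_image_closed hf,
        Set.image_subset_iff]
      exact Set.image_subset_iff
    rw [h]; exact hyper_isOpen_subset (hU.preimage hf)
  · have h : hyperMap f ⁻¹' {K : Hyper X | (K.1 ∩ U).Nonempty}
        = {K : Hyper X | (K.1 ∩ f ⁻¹' U).Nonempty} := by
      ext K
      simp only [Set.mem_preimage, Set.mem_setOf_eq, hyperMap, hyperMap_image_closed hf,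
        Set.image_inter_nonempty_iff]
      exact Set.image_inter_nonempty_iff
    rw [h]; exact hyper_isOpen_inter (hU.preimage hf)

lemma hyper_mem_closure {X : Type*} [TopologicalSpace X] {S : Set (Hyper X)} {K : Hyper X}
    (h : K ∈ closure S) {O : Set (Hyper X)} (hO : IsOpen O) (hK : K ∈ O) :
    (O ∩ S).Nonempty :=
  mem_closure_iff.mp h O hO hK

/-- Claim in the proof of Theorem 6C. Let `φ : X → Y` be an extension of compact
semiflows of a topological monoid `T` with `t • φ⁻¹(y) = φ⁻¹(t • y)` for all `t, y`.
If `φ` is highly proximal and the almost periodic points of `X` are dense, then every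
nonempty open subset of `X` contains a full fiber `φ⁻¹(y)`. -/
theorem exists_fiber_subset_of_highlyProximal
    {T X Y : Type*} [Monoid T] [TopologicalSpace T] [ContinuousMul T]
    [TopologicalSpace X] [CompactSpace X] [T2Space X]
    [MulAction T X] [ContinuousSMul T X]
    [TopologicalSpace Y] [CompactSpace Y] [T2Space Y]
    [MulAction T Y] [ContinuousSMul T Y]
    {φ : X → Y} (hc : Continuous φ) (hs : Function.Surjective φ)
    (hequiv : ∀ (t : T) (x : X), φ (t • x) = t • φ x)
    (hfiber : ∀ (t : T) (y : Y), (fun x : X => t • x) '' (φ ⁻¹' {y}) = φ ⁻¹' {t • y})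
    (hhp : HighlyProximal T φ hc hs)
    (hap : Dense {x : X | IsAlmostPeriodicPt T x}) :
    ∀ U : Set X, IsOpen U → U.Nonempty → ∃ y : Y, φ ⁻¹' {y} ⊆ U := by
  intro U hU hUne
  obtain ⟨x₀, hx₀ap, hx₀U⟩ := hap.exists_mem_open hU hUne
  set y₀ := φ x₀ with hy₀
  obtain ⟨x, hx⟩ := hhp y₀
  set F : T → Hyper X := fun t : T =>
    hyperMap (fun z : X => t • z)
      ⟨φ ⁻¹' {y₀}, isClosed_singleton.preimage hc,
        (Set.singleton_nonempty y₀).preimage hs⟩ with hF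
  have hFfiber : ∀ t : T, (F t).1 = φ ⁻¹' {t • y₀} := by
    intro t
    show closure ((fun z : X => t • z) '' (φ ⁻¹' {y₀})) = _
    rw [hfiber t y₀]
    exact (isClosed_singleton.preimage hc).closure_eq
  -- Step 1 : x is in the closure of the orbit of x₀
  have hxorb : x ∈ closure (MulAction.orbit T x₀) := by
    rw [mem_closure_iff]
    intro W hW hxW
    obtain ⟨K, hKW, t, rfl⟩ := hyper_mem_closure hx
      (hyper_isOpen_subset hW) (Set.singleton_subset_iff.mpr hxW)
    refine ⟨t • x₀, ?_, ⟨t, rfl⟩⟩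
    apply hKW
    rw [hFfiber t]
    simp [hequiv t x₀, hy₀]
  -- Step 2 : x₀ is in the closure of the orbit of x
  have hx₀orb : x₀ ∈ closure (MulAction.orbit T x) := by
    rw [hx₀ap.2 x hxorb]; exact hx₀ap.1
  -- Step 3 : some s • x lies in U
  obtain ⟨_, hzU, s, rfl⟩ := mem_closure_iff.mp hx₀orb U hU hx₀U
  -- Step 4 : the singleton {s • x} lies in the closure of the range of F
  have hcont : Continuous (hyperMap (fun z : X => s • z)) :=
    hyperMap_continuous (continuous_const_smul s)
  have hsing : hyperMap (fun z : X => s • z)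
      (⟨{x}, isClosed_singleton, Set.singleton_nonempty x⟩ : Hyper X)
      = (⟨{s • x}, isClosed_singleton, Set.singleton_nonempty _⟩ : Hyper X) := by
    apply Subtype.ext
    show closure ((fun z : X => s • z) '' {x}) = {s • x}
    rw [Set.image_singleton, closure_singleton]
  have himg : hyperMap (fun z : X => s • z) '' Set.range F ⊆ Set.range F := by
    rintro _ ⟨_, ⟨t, rfl⟩, rfl⟩
    refine ⟨s * t, ?_⟩
    apply Subtype.ext
    show (F (s * t)).1 = closure ((fun z : X => s • z) '' (F t).1)
    rw [hFfiber (s * t), hFfiber t, hfiber s (t • y₀), mul_smul,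
      (isClosed_singleton.preimage hc).closure_eq]
  have hmem : (⟨{s • x}, isClosed_singleton, Set.singleton_nonempty _⟩ : Hyper X)
      ∈ closure (Set.range F) := by
    have h1 := image_closure_subset_closure_image (s := Set.range F) hcont
      ⟨_, hx, hsing⟩
    exact closure_mono himg h1
  -- Step 5 : some fiber is contained in U
  obtain ⟨K, hKU, t, rfl⟩ := hyper_mem_closure hmem
    (hyper_isOpen_subset hU) (Set.singleton_subset_iff.mpr hzU)
  refine ⟨t • y₀, ?_⟩
  rw [← hFfiber t]
  exact hKU
end

section
/- Let φ : X → Y be an extension of compact flows of a topological group T. Then the following are equivalent: (i) φ is open; (ii) the induced map 2^φ : 2^X → 2^Y is open; (iii) the induced map 2^{2^φ} : 2^{2^X} → 2^{2^Y} is open. -/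
section Aux

variable {X Y : Type*} [TopologicalSpace X] [TopologicalSpace Y]

/-- The generating set of the Vietoris topology. -/
def hyperGen (X : Type*) [TopologicalSpace X] : Set (Set (Hyper X)) :=
  {S | ∃ U : Set X, IsOpen U ∧ S = {K : Hyper X | K.1 ⊆ U}} ∪
  {S | ∃ U : Set X, IsOpen U ∧ S = {K : Hyper X | (K.1 ∩ U).Nonempty}}

lemma hyperTop_eq (X : Type*) [TopologicalSpace X] :
    Hyper.instTopologicalSpace X = TopologicalSpace.generateFrom (hyperGen X) := rfl

lemma isOpen_hyperSub {U : Set X} (hU : IsOpen U) : IsOpen {K : Hyper X | K.1 ⊆ U} :=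
  TopologicalSpace.isOpen_generateFrom_of_mem (Or.inl ⟨U, hU, rfl⟩)

lemma isOpen_hyperHit {U : Set X} (hU : IsOpen U) :
    IsOpen {K : Hyper X | (K.1 ∩ U).Nonempty} :=
  TopologicalSpace.isOpen_generateFrom_of_mem (Or.inr ⟨U, hU, rfl⟩)

lemma hyperMap_fst [CompactSpace X] [T2Space Y] {f : X → Y} (hc : Continuous f)
    (K : Hyper X) : (hyperMap f K).1 = f '' K.1 :=
  (K.2.1.isCompact.image hc).isClosed.closure_eq

lemma continuous_hyperMap [CompactSpace X] [T2Space Y] {f : X → Y} (hc : Continuous f) :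
    Continuous (hyperMap f) := by
  have : @Continuous _ _ (Hyper.instTopologicalSpace X)
      (TopologicalSpace.generateFrom (hyperGen Y)) (hyperMap f) := by
    rw [continuous_generateFrom_iff]
    rintro s (⟨U, hU, rfl⟩ | ⟨U, hU, rfl⟩)
    · have : hyperMap f ⁻¹' {K : Hyper Y | K.1 ⊆ U} = {K : Hyper X | K.1 ⊆ f ⁻¹' U} := by
        ext K
        simp only [Set.mem_preimage, Set.mem_setOf_eq, hyperMap_fst hc, Set.image_subset_iff]
      rw [this]; exact isOpen_hyperSub (hU.preimage hc)
    · have : hyperMap f ⁻¹' {K : Hyper Y | (K.1 ∩ U).Nonempty}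
          = {K : Hyper X | (K.1 ∩ f ⁻¹' U).Nonempty} := by
        ext K
        simp only [Set.mem_preimage, Set.mem_setOf_eq, hyperMap_fst hc,
          Set.image_inter_nonempty_iff]
      rw [this]; exact isOpen_hyperHit (hU.preimage hc)
  exact this

lemma surjective_hyperMap {f : X → Y} (hc : Continuous f) (hs : Function.Surjective f) :
    Function.Surjective (hyperMap f) := by
  intro L
  obtain ⟨y, hy⟩ := L.2.2
  obtain ⟨x, rfl⟩ := hs y
  refine ⟨⟨f ⁻¹' L.1, L.2.1.preimage hc, ⟨x, hy⟩⟩, Subtype.ext ?_⟩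
  show closure (f '' (f ⁻¹' L.1)) = L.1
  rw [Set.image_preimage_eq L.1 hs, L.2.1.closure_eq]

instance [CompactSpace X] [T2Space X] : T2Space (Hyper X) := by
  have key : ∀ K L : Hyper X, ∀ x : X, x ∈ K.1 → x ∉ L.1 →
      ∃ u v : Set (Hyper X), IsOpen u ∧ IsOpen v ∧ K ∈ u ∧ L ∈ v ∧ Disjoint u v := by
    intro K L x hxK hxL
    obtain ⟨u, v, hu, hv, hxu, hLv, huv⟩ :=
      NormalSpace.normal {x} L.1 isClosed_singleton L.2.1 (by simpa using hxL)
    refine ⟨{M : Hyper X | (M.1 ∩ u).Nonempty}, {M : Hyper X | M.1 ⊆ v},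
      isOpen_hyperHit hu, isOpen_hyperSub hv, ⟨x, hxK, hxu rfl⟩, hLv, ?_⟩
    rw [Set.disjoint_left]
    rintro M ⟨z, hzM, hzu⟩ hMv
    exact Set.disjoint_left.1 huv hzu (hMv hzM)
  constructor
  intro K L hKL
  have h1 : K.1 ≠ L.1 := fun h => hKL (Subtype.ext h)
  by_cases hsub : K.1 ⊆ L.1
  · have : ¬ L.1 ⊆ K.1 := fun h => h1 (subset_antisymm hsub h)
    obtain ⟨x, hxL, hxK⟩ := Set.not_subset.1 this
    obtain ⟨u, v, hu, hv, hLu, hKv, huv⟩ := key L K x hxL hxK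
    exact ⟨v, u, hv, hu, hKv, hLu, huv.symm⟩
  · obtain ⟨x, hxK, hxL⟩ := Set.not_subset.1 hsub
    exact key K L x hxK hxL

instance [CompactSpace X] : CompactSpace (Hyper X) := by
  constructor
  rw [isCompact_iff_ultrafilter_le_nhds]
  intro 𝒰 _
  set A := {x : X | ∀ U : Set X, IsOpen U → x ∈ U →
    {K : Hyper X | (K.1 ∩ U).Nonempty} ∈ 𝒰} with hA
  have hAc : IsClosed A := by
    rw [← isOpen_compl_iff, isOpen_iff_forall_mem_open]
    intro x hx
    simp only [hA, Set.mem_compl_iff, Set.mem_setOf_eq] at hx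
    push_neg at hx
    obtain ⟨U, hUo, hxU, hU⟩ := hx
    refine ⟨U, fun y hy hyA => hU (hyA U hUo hy), hUo, hxU⟩
  have hAne : A.Nonempty := by
    by_contra h
    have hx : ∀ x : X, ∃ U : Set X, IsOpen U ∧ x ∈ U ∧
        {K : Hyper X | (K.1 ∩ U).Nonempty} ∉ 𝒰 := by
      intro x
      have hxA : x ∉ A := fun hxA => h ⟨x, hxA⟩
      simp only [hA, Set.mem_setOf_eq] at hxA
      push_neg at hxA
      exact hxA
    choose U hUo hxU hU𝒰 using hx
    obtain ⟨t, ht⟩ := isCompact_univ.elim_finite_subcover U hUo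
      (fun x _ => Set.mem_iUnion.2 ⟨x, hxU x⟩)
    have hmem : (⋂ x ∈ t, {K : Hyper X | (K.1 ∩ U x).Nonempty}ᶜ) ∈ 𝒰 :=
      (Filter.biInter_mem t.finite_toSet).2
        (fun x _ => Ultrafilter.compl_mem_iff_notMem.2 (hU𝒰 x))
    obtain ⟨K, hK⟩ := Ultrafilter.nonempty_of_mem hmem
    obtain ⟨z, hz⟩ := K.2.2
    obtain ⟨x, hxt, hzU⟩ := Set.mem_iUnion₂.1 (ht (Set.mem_univ z))
    exact (Set.mem_iInter₂.1 hK x hxt) ⟨z, hz, hzU⟩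
  refine ⟨⟨A, hAc, hAne⟩, trivial, ?_⟩
  have : (𝒰 : Filter (Hyper X)) ≤
      @nhds _ (TopologicalSpace.generateFrom (hyperGen X)) ⟨A, hAc, hAne⟩ := by
    refine le_trans ?_ (TopologicalSpace.nhds_generateFrom (g := hyperGen X)
      (a := (⟨A, hAc, hAne⟩ : Hyper X))).ge
    refine le_iInf₂ fun s hs => ?_
    rw [Filter.le_principal_iff]
    obtain ⟨hKs, hsg⟩ := hs
    rcases hsg with ⟨U, hUo, rfl⟩ | ⟨U, hUo, rfl⟩
    · -- `A ⊆ U`; show `{K | K.1 ⊆ U} ∈ 𝒰`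
      have hAU : A ⊆ U := hKs
      by_contra hmem
      have hcompl : {K : Hyper X | K.1 ⊆ U}ᶜ ∈ 𝒰 :=
        Ultrafilter.compl_mem_iff_notMem.2 hmem
      have hcov : ∀ x : (Uᶜ : Set X), ∃ V : Set X, IsOpen V ∧ (x : X) ∈ V ∧
          {K : Hyper X | (K.1 ∩ V).Nonempty} ∉ 𝒰 := by
        rintro ⟨x, hx⟩
        have hxA : x ∉ A := fun hxA => hx (hAU hxA)
        simp only [hA, Set.mem_setOf_eq] at hxA
        push_neg at hxA
        exact hxA
      choose V hVo hxV hV𝒰 using hcov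
      have hUc : IsCompact (Uᶜ) := hUo.isClosed_compl.isCompact
      obtain ⟨t, ht⟩ := hUc.elim_finite_subcover V hVo
        (fun x hx => Set.mem_iUnion.2 ⟨⟨x, hx⟩, hxV ⟨x, hx⟩⟩)
      have hmem2 : ((⋂ x ∈ t, {K : Hyper X | (K.1 ∩ V x).Nonempty}ᶜ) ∩
          {K : Hyper X | K.1 ⊆ U}ᶜ) ∈ 𝒰 :=
        Filter.inter_mem
          ((Filter.biInter_mem t.finite_toSet).2
            (fun x _ => Ultrafilter.compl_mem_iff_notMem.2 (hV𝒰 x))) hcompl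
      obtain ⟨K, hK1, hK2⟩ := Ultrafilter.nonempty_of_mem hmem2
      obtain ⟨z, hzK, hzU⟩ := Set.not_subset.1 hK2
      obtain ⟨x, hxt, hzV⟩ := Set.mem_iUnion₂.1 (ht hzU)
      exact (Set.mem_iInter₂.1 hK1 x hxt) ⟨z, hzK, hzV⟩
    · -- `(A ∩ U).Nonempty`
      obtain ⟨x, hxA, hxU⟩ := hKs
      exact hxA U hUo hxU
  exact this

/-- If `f` is open then `2^f` is open. -/
lemma isOpenMap_hyperMap [CompactSpace X] [T2Space X] [T2Space Y] {f : X → Y}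
    (hc : Continuous f) (hf : IsOpenMap f) : IsOpenMap (hyperMap f) := by
  intro O hO
  rw [isOpen_iff_forall_mem_open]
  rintro L ⟨K, hKO, rfl⟩
  have hbasis := TopologicalSpace.isTopologicalBasis_of_subbasis (hyperTop_eq X)
  obtain ⟨v, hvB, hKv, hvO⟩ := hbasis.exists_subset_of_mem_open hKO hO
  obtain ⟨F, ⟨hFfin, hFsub⟩, rfl⟩ := hvB
  -- decompose the finite family `F` of subbasic sets
  have hchoice : ∀ s ∈ F, ∃ V : Set X, IsOpen V ∧
      (s = {K : Hyper X | K.1 ⊆ V} ∨ s = {K : Hyper X | (K.1 ∩ V).Nonempty}) := by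
    intro s hs
    rcases hFsub hs with ⟨V, hV, rfl⟩ | ⟨V, hV, rfl⟩
    · exact ⟨V, hV, Or.inl rfl⟩
    · exact ⟨V, hV, Or.inr rfl⟩
  choose! V hVo hVcase using hchoice
  set Fsub : Set (Set (Hyper X)) := {s ∈ F | s = {K : Hyper X | K.1 ⊆ V s}} with hFsubdef
  set Fhit : Set (Set (Hyper X)) := F \ Fsub with hFhitdef
  have hFsubfin : Fsub.Finite := hFfin.subset (Set.sep_subset _ _)
  have hFhitfin : Fhit.Finite := hFfin.subset (Set.diff_subset)
  have hFhitF : ∀ s ∈ Fhit, s ∈ F := fun s hs => hs.1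
  have hFhiteq : ∀ s ∈ Fhit, s = {K : Hyper X | (K.1 ∩ V s).Nonempty} := by
    rintro s ⟨hsF, hsn⟩
    rcases hVcase s hsF with h | h
    · exact absurd ⟨hsF, h⟩ hsn
    · exact h
  set U : Set X := ⋂ s ∈ Fsub, V s with hUdef
  have hUo : IsOpen U := hFsubfin.isOpen_biInter (fun s hs => hVo s hs.1)
  have hKU : K.1 ⊆ U := by
    refine Set.subset_iInter₂ fun s hs => ?_
    have := Set.mem_sInter.1 hKv s hs.1
    rw [hs.2] at this
    exact this
  have hKhit : ∀ s ∈ Fhit, (K.1 ∩ V s).Nonempty := by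
    intro s hs
    have := Set.mem_sInter.1 hKv s (hFhitF s hs)
    rw [hFhiteq s hs] at this
    exact this
  -- choose `W` with `K ⊆ W ⊆ closure W ⊆ U`
  obtain ⟨C, hC, hKC, hCU⟩ := exists_compact_between K.2.1.isCompact hUo hKU
  set W : Set X := interior C with hWdef
  have hWo : IsOpen W := isOpen_interior
  have hKW : K.1 ⊆ W := hKC
  have hclW : closure W ⊆ U := (closure_minimal interior_subset hC.isClosed).trans hCU
  -- for each hit-set choose a small open `G s`
  have hGex : ∀ s ∈ Fhit, ∃ G : Set X, IsOpen G ∧ (K.1 ∩ G).Nonempty ∧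
      G ⊆ V s ∧ closure G ⊆ U := by
    intro s hs
    obtain ⟨z, hzK, hzV⟩ := hKhit s hs
    have hzU : z ∈ V s ∩ U := ⟨hzV, hKU hzK⟩
    obtain ⟨C', hC', hzC', hC'VU⟩ := exists_compact_between isCompact_singleton
      ((hVo s (hFhitF s hs)).inter hUo) (Set.singleton_subset_iff.2 hzU)
    refine ⟨interior C', isOpen_interior, ⟨z, hzK, hzC' rfl⟩, ?_, ?_⟩
    · exact fun x hx => (hC'VU (interior_subset hx)).1
    · exact fun x hx =>
        (hC'VU ((closure_minimal interior_subset hC'.isClosed) hx)).2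
  choose! G hGo hGK hGV hGcl using hGex
  -- the neighborhood of `hyperMap f K` inside the image
  set N : Set (Hyper Y) := {M : Hyper Y | M.1 ⊆ f '' W} ∩
    ⋂ s ∈ Fhit, {M : Hyper Y | (M.1 ∩ f '' G s).Nonempty} with hNdef
  have hNo : IsOpen N :=
    (isOpen_hyperSub (hf W hWo)).inter
      (hFhitfin.isOpen_biInter fun s hs => isOpen_hyperHit (hf _ (hGo s hs)))
  have hLmem : hyperMap f K ∈ N := by
    constructor
    · show (hyperMap f K).1 ⊆ f '' W
      rw [hyperMap_fst hc]
      exact Set.image_mono hKW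
    · refine Set.mem_iInter₂.2 fun s hs => ?_
      obtain ⟨z, hzK, hzG⟩ := hGK s hs
      show ((hyperMap f K).1 ∩ f '' G s).Nonempty
      rw [hyperMap_fst hc]
      exact ⟨f z, ⟨z, hzK, rfl⟩, ⟨z, hzG, rfl⟩⟩
  refine ⟨N, ?_, hNo, hLmem⟩
  rintro M ⟨hMW, hMhit⟩
  -- construct a preimage of `M`
  set K' : Set X := f ⁻¹' M.1 ∩ (closure W ∪ ⋃ s ∈ Fhit, closure (G s)) with hK'def
  have hK'c : IsClosed K' :=
    (M.2.1.preimage hc).inter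
      (isClosed_closure.union (hFhitfin.isClosed_biUnion fun s _ => isClosed_closure))
  have himg : f '' K' = M.1 := by
    apply subset_antisymm
    · rintro y ⟨x, ⟨hxM, _⟩, rfl⟩; exact hxM
    · intro y hy
      obtain ⟨x, hxW, rfl⟩ := hMW hy
      exact ⟨x, ⟨hy, Or.inl (subset_closure hxW)⟩, rfl⟩
  have hK'ne : K'.Nonempty := by
    obtain ⟨y, hy⟩ := M.2.2
    rw [← himg] at hy
    obtain ⟨x, hx, _⟩ := hy
    exact ⟨x, hx⟩
  have hK'U : K' ⊆ U := by
    rintro x ⟨_, hx2⟩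
    rcases hx2 with hw | hg
    · exact hclW hw
    · obtain ⟨s, hs, hxs⟩ := Set.mem_iUnion₂.1 hg
      exact hGcl s hs hxs
  have hK'mem : (⟨K', hK'c, hK'ne⟩ : Hyper X) ∈ ⋂₀ F := by
    refine Set.mem_sInter.2 fun s hs => ?_
    by_cases hcase : s ∈ Fsub
    · rw [hcase.2]
      exact fun x hx => Set.mem_iInter₂.1 (hK'U hx) s hcase
    · have hshit : s ∈ Fhit := ⟨hs, hcase⟩
      rw [hFhiteq s hshit]
      obtain ⟨y, hyM, x, hxG, rfl⟩ := Set.mem_iInter₂.1 hMhit s hshit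
      exact ⟨x, ⟨hyM, Or.inr (Set.mem_iUnion₂.2 ⟨s, hshit, subset_closure hxG⟩)⟩,
        hGV s hshit hxG⟩
  refine ⟨⟨K', hK'c, hK'ne⟩, hvO hK'mem, Subtype.ext ?_⟩
  show closure (f '' K') = M.1
  rw [himg, M.2.1.closure_eq]

/-- If `2^f` is open then `f` is open. -/
lemma isOpenMap_of_isOpenMap_hyperMap [CompactSpace X] [T1Space X] [T2Space Y] {f : X → Y}
    (hc : Continuous f) (hf : IsOpenMap (hyperMap f)) : IsOpenMap f := by
  set i : Y → Hyper Y := fun y => ⟨{y}, isClosed_singleton, ⟨y, rfl⟩⟩ with hidef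
  have hi : Continuous i := by
    have : @Continuous _ _ _ (TopologicalSpace.generateFrom (hyperGen Y)) i := by
      rw [continuous_generateFrom_iff]
      rintro s (⟨U, hU, rfl⟩ | ⟨U, hU, rfl⟩)
      · have : i ⁻¹' {K : Hyper Y | K.1 ⊆ U} = U := by
          ext y; exact Set.singleton_subset_iff
        rw [this]; exact hU
      · have : i ⁻¹' {K : Hyper Y | (K.1 ∩ U).Nonempty} = U := by
          ext y; exact Set.singleton_inter_nonempty
        rw [this]; exact hU
    exact this
  intro O hO
  have h1 : IsOpen (hyperMap f '' {K : Hyper X | K.1 ⊆ O}) :=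
    hf _ (isOpen_hyperSub hO)
  have heq : f '' O = i ⁻¹' (hyperMap f '' {K : Hyper X | K.1 ⊆ O}) := by
    ext y
    constructor
    · rintro ⟨x, hx, rfl⟩
      refine ⟨⟨{x}, isClosed_singleton, ⟨x, rfl⟩⟩, Set.singleton_subset_iff.2 hx,
        Subtype.ext ?_⟩
      show closure (f '' {x}) = {f x}
      rw [Set.image_singleton, closure_singleton]
    · rintro ⟨K, hKO, hKy⟩
      have h2 : closure (f '' K.1) = {y} := congrArg Subtype.val hKy
      have h3 : f '' K.1 = {y} := by
        rw [← h2, (K.2.1.isCompact.image hc).isClosed.closure_eq]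
      obtain ⟨x, hxK⟩ := K.2.2
      have : f x ∈ ({y} : Set Y) := h3 ▸ ⟨x, hxK, rfl⟩
      exact ⟨x, hKO hxK, this⟩
  rw [heq]
  exact h1.preimage hi

end Aux

/-- Corollary 8. Let `φ : X → Y` be an extension of compact flows of a topological group
`T`. Then `φ` is open iff `2^φ : 2^X → 2^Y` is open iff `2^{2^φ} : 2^{2^X} → 2^{2^Y}`
is open. -/
theorem isOpenMap_iff_hyperMap_iff_hyperMap_hyperMap
    {T X Y : Type*} [Group T] [TopologicalSpace T] [IsTopologicalGroup T]
    [TopologicalSpace X] [CompactSpace X] [T2Space X]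
    [MulAction T X] [ContinuousSMul T X]
    [TopologicalSpace Y] [CompactSpace Y] [T2Space Y]
    [MulAction T Y] [ContinuousSMul T Y]
    {φ : X → Y} (hc : Continuous φ) (hs : Function.Surjective φ)
    (hequiv : ∀ (t : T) (x : X), φ (t • x) = t • φ x) :
    (IsOpenMap φ ↔ IsOpenMap (hyperMap φ)) ∧
    (IsOpenMap φ ↔ IsOpenMap (hyperMap (hyperMap φ))) := by
  have hc1 : Continuous (hyperMap φ) := continuous_hyperMap hc
  have h1 : IsOpenMap φ ↔ IsOpenMap (hyperMap φ) :=
    ⟨fun h => isOpenMap_hyperMap hc h, fun h => isOpenMap_of_isOpenMap_hyperMap hc h⟩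
  have h2 : IsOpenMap (hyperMap φ) ↔ IsOpenMap (hyperMap (hyperMap φ)) :=
    ⟨fun h => isOpenMap_hyperMap hc1 h, fun h => isOpenMap_of_isOpenMap_hyperMap hc1 h⟩
  exact ⟨h1, h1.trans h2⟩
end

section
/- Let φ : X → Y be a continuous surjection between compact Hausdorff spaces. Then φ is irreducible if and only if the induced map 2^φ : 2^X → 2^Y, K ↦ φ[K], is irreducible. -/
/-- A continuous surjection `φ : X → Y` is *irreducible* if the only nonempty closed
subset `A ⊆ X` with `φ[A] = Y` is `A = X`. -/
def IrreducibleMap {X Y : Type*} [TopologicalSpace X] [TopologicalSpace Y]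
    (φ : X → Y) : Prop :=
  ∀ A : Set X, IsClosed A → A.Nonempty → φ '' A = Set.univ → A = Set.univ

open Set

lemma hyperMap_coe {X Y : Type*} [TopologicalSpace X] [CompactSpace X]
    [TopologicalSpace Y] [T2Space Y] {φ : X → Y} (hc : Continuous φ) (K : Hyper X) :
    (hyperMap φ K).1 = φ '' K.1 :=
  ((K.2.1.isCompact.image hc).isClosed).closure_eq

lemma exists_fiber_subset {X Y : Type*} [TopologicalSpace X]
    [TopologicalSpace Y] {φ : X → Y} (hirr : IrreducibleMap φ)
    {U : Set X} (hU : IsOpen U) (hne : U.Nonempty) :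
    ∃ y : Y, φ ⁻¹' {y} ⊆ U := by
  by_cases hC : (Uᶜ : Set X).Nonempty
  · have himg : φ '' Uᶜ ≠ univ := by
      intro heq
      have h2 := hirr Uᶜ hU.isClosed_compl hC heq
      obtain ⟨x, hx⟩ := hne
      exact (h2 ▸ mem_univ x : x ∈ Uᶜ) hx
    obtain ⟨y, hy⟩ := (ne_univ_iff_exists_notMem _).mp himg
    refine ⟨y, fun x hx => ?_⟩
    by_contra hxU
    exact hy ⟨x, hxU, hx⟩
  · obtain ⟨x, hx⟩ := hne
    have : U = univ := by
      rw [Set.not_nonempty_iff_eq_empty, compl_empty_iff] at hC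
      exact hC
    exact ⟨φ x, by simp [this]⟩

/-- Theorem 9B. A continuous surjection `φ : X → Y` of compact Hausdorff spaces is
irreducible iff the induced map `2^φ : 2^X → 2^Y` is irreducible. -/
theorem irreducibleMap_iff_irreducibleMap_hyperMap
    {X Y : Type*} [TopologicalSpace X] [CompactSpace X] [T2Space X]
    [TopologicalSpace Y] [CompactSpace Y] [T2Space Y]
    {φ : X → Y} (hc : Continuous φ) (hs : Function.Surjective φ) :
    IrreducibleMap φ ↔ IrreducibleMap (hyperMap φ) := by
  classical
  constructor
  · -- hard direction
    intro hirr 𝒜 h𝒜cl h𝒜ne h𝒜surj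
    by_contra hA
    obtain ⟨K₀, hK₀⟩ := (ne_univ_iff_exists_notMem _).mp hA
    have hopen : IsOpen 𝒜ᶜ := h𝒜cl.isOpen_compl
    have hbasis := TopologicalSpace.isTopologicalBasis_of_subbasis
      (rfl : Hyper.instTopologicalSpace X = TopologicalSpace.generateFrom _)
    obtain ⟨v, hvB, hK₀v, hvsub⟩ := hbasis.exists_subset_of_mem_open hK₀ hopen
    obtain ⟨f, ⟨hfin, hsubS⟩, hveq⟩ := hvB
    have hveq' : ⋂₀ f = v := hveq
    -- f nonempty
    have hfne : f.Nonempty := by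
      rcases Set.eq_empty_or_nonempty f with h | h
      · exfalso
        obtain ⟨K, hK⟩ := h𝒜ne
        have : K ∈ v := by rw [← hveq']; simp [h]
        exact hvsub this hK
      · exact h
    -- choose U
    have hsel : ∀ s : Set (Hyper X), ∃ U : Set X, IsOpen U ∧ (s ∈ f →
        (s = {K : Hyper X | K.1 ⊆ U} ∨ s = {K : Hyper X | (K.1 ∩ U).Nonempty})) := by
      intro s
      by_cases hsf : s ∈ f
      · rcases hsubS hsf with ⟨U, hU, hUeq⟩ | ⟨U, hU, hUeq⟩
        · exact ⟨U, hU, fun _ => Or.inl hUeq⟩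
        · exact ⟨U, hU, fun _ => Or.inr hUeq⟩
      · exact ⟨∅, isOpen_empty, fun h => absurd h hsf⟩
    choose U hUopen hUeq using hsel
    have hK₀f : ∀ s ∈ f, K₀ ∈ s := by
      intro s hsf
      have : K₀ ∈ ⋂₀ f := hveq' ▸ hK₀v
      exact this s hsf
    set up : Set (Hyper X) → Prop := fun s => s = {K : Hyper X | K.1 ⊆ U s} with hup
    set W : Set X := ⋂ s ∈ f, (if up s then U s else univ) with hW
    have hWopen : IsOpen W := by
      refine hfin.isOpen_biInter (fun s hsf => ?_)
      split_ifs with h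
      · exact hUopen s
      · exact isOpen_univ
    have hK₀W : K₀.1 ⊆ W := by
      intro x hx
      refine mem_iInter₂.mpr (fun s hsf => ?_)
      split_ifs with h
      · have := hK₀f s hsf
        rw [h] at this
        exact this hx
      · exact mem_univ x
    -- O s := U s ∩ W is open nonempty for s ∈ f
    have hOopen : ∀ s, IsOpen (U s ∩ W) := fun s => (hUopen s).inter hWopen
    have hOne : ∀ s ∈ f, (U s ∩ W).Nonempty := by
      intro s hsf
      by_cases h : up s
      · obtain ⟨x, hx⟩ := K₀.2.2
        have hxU : x ∈ U s := by
          have := hK₀f s hsf; rw [h] at this; exact this hx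
        exact ⟨x, hxU, hK₀W hx⟩
      · have hlow : K₀ ∈ {K : Hyper X | (K.1 ∩ U s).Nonempty} := by
          rcases hUeq s hsf with h' | h'
          · exact absurd h' h
          · rw [← h']; exact hK₀f s hsf
        obtain ⟨x, hxK, hxU⟩ := hlow
        exact ⟨x, hxU, hK₀W hxK⟩
    obtain ⟨x₀, hx₀⟩ := K₀.2.2
    haveI : Nonempty Y := ⟨φ x₀⟩
    have hysel : ∀ s : Set (Hyper X), ∃ y : Y, s ∈ f → φ ⁻¹' {y} ⊆ U s ∩ W := by
      intro s
      by_cases hsf : s ∈ f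
      · obtain ⟨y, hy⟩ := exists_fiber_subset hirr (hOopen s) (hOne s hsf)
        exact ⟨y, fun _ => hy⟩
      · exact ⟨Classical.arbitrary Y, fun h => absurd h hsf⟩
    choose y hy using hysel
    -- the target L
    have hLcl : IsClosed (y '' f) := (hfin.image y).isClosed
    have hLne : (y '' f).Nonempty := hfne.image y
    obtain ⟨K, hK𝒜, hKL⟩ : ∃ K ∈ 𝒜, hyperMap φ K = ⟨y '' f, hLcl, hLne⟩ := by
      have := h𝒜surj ▸ mem_univ (⟨y '' f, hLcl, hLne⟩ : Hyper Y)
      obtain ⟨K, hK, hK2⟩ := this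
      exact ⟨K, hK, hK2⟩
    have hKimg : φ '' K.1 = y '' f := by
      have := congrArg Subtype.val hKL
      rwa [hyperMap_coe hc] at this
    -- K ∈ ⋂₀ f
    have hKf : K ∈ ⋂₀ f := by
      intro s hsf
      have hKW : K.1 ⊆ W := by
        intro x hx
        have : φ x ∈ y '' f := hKimg ▸ mem_image_of_mem φ hx
        obtain ⟨t, htf, hty⟩ := this
        have : x ∈ φ ⁻¹' {y t} := by simp [hty]
        exact (hy t htf this).2
      by_cases h : up s
      · rw [h]
        intro x hx
        have hxW := hKW hx
        have := mem_iInter₂.mp hxW s hsf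
        rwa [if_pos h] at this
      · have hlow : s = {K : Hyper X | (K.1 ∩ U s).Nonempty} := by
          rcases hUeq s hsf with h' | h'
          · exact absurd h' h
          · exact h'
        rw [hlow]
        have : y s ∈ φ '' K.1 := hKimg ▸ mem_image_of_mem y hsf
        obtain ⟨x, hxK, hxy⟩ := this
        have : x ∈ φ ⁻¹' {y s} := by simp [hxy]
        exact ⟨x, hxK, (hy s hsf this).1⟩
    have : K ∈ v := hveq' ▸ hKf
    exact hvsub this hK𝒜
  · -- easy direction
    intro hirr A hAcl hAne hAim
    set 𝒜 : Set (Hyper X) := {K | K.1 ⊆ A} with h𝒜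
    have h𝒜cl : IsClosed 𝒜 := by
      rw [← isOpen_compl_iff]
      have : 𝒜ᶜ = {K : Hyper X | (K.1 ∩ Aᶜ).Nonempty} := by
        ext K
        simp [h𝒜, Set.not_subset, Set.Nonempty, mem_compl_iff]
      rw [this]
      exact TopologicalSpace.isOpen_generateFrom_of_mem
        (Or.inr ⟨Aᶜ, hAcl.isOpen_compl, rfl⟩)
    have h𝒜ne : 𝒜.Nonempty := ⟨⟨A, hAcl, hAne⟩, fun x hx => hx⟩
    have h𝒜surj : hyperMap φ '' 𝒜 = univ := by
      rw [eq_univ_iff_forall]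
      intro L
      set K : Set X := A ∩ φ ⁻¹' L.1 with hK
      have hKcl : IsClosed K := hAcl.inter (L.2.1.preimage hc)
      have hKim : φ '' K = L.1 := by
        apply Subset.antisymm
        · rintro _ ⟨x, ⟨_, hx2⟩, rfl⟩
          exact hx2
        · intro yy hyy
          have : yy ∈ φ '' A := hAim ▸ mem_univ yy
          obtain ⟨x, hxA, rfl⟩ := this
          exact ⟨x, ⟨hxA, hyy⟩, rfl⟩
      have hKne : K.Nonempty := by
        obtain ⟨yy, hyy⟩ := L.2.2
        have : yy ∈ φ '' A := hAim ▸ mem_univ yy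
        obtain ⟨x, hxA, rfl⟩ := this
        exact ⟨x, hxA, hyy⟩
      refine ⟨⟨K, hKcl, hKne⟩, fun x hx => hx.1, ?_⟩
      apply Subtype.ext
      refine (hyperMap_coe hc (⟨K, hKcl, hKne⟩ : Hyper X)).trans ?_
      exact hKim
    have := hirr 𝒜 h𝒜cl h𝒜ne h𝒜surj
    rw [eq_univ_iff_forall]
    intro x
    have hx : (⟨{x}, isClosed_singleton, singleton_nonempty x⟩ : Hyper X) ∈ 𝒜 :=
      this ▸ mem_univ _
    exact hx rfl
end
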